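/- Let R be a discrete valuation ring with uniformizer π and let f = X^{2n+1} + a_{2n}X^{2n} + ⋯ + a₁X + a₀ ∈ R[X] be a monic polynomial of odd degree 2n+1 (n ≥ 1) such that π divides a₁ and π² divides a₀. Then π² divides Res(f, f'), the resultant of f and its derivative f'. -/

import Mathlib

open Polynomial

/-- The Sylvester matrix of `f` and `g`, viewed as polynomials of degree (at most)
`m` and `n` respectively: an `(m+n) × (m+n)` matrix whose first `n` rows are the
shifted coefficient vectors of `f` and whose last `m` rows are the shifted
coefficient vectors of `g`. -/
def sylvester {R : Type*} [CommRing R] (m n : ℕ) (f g : Polynomial R) :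
    Matrix (Fin (m + n)) (Fin (m + n)) R :=
  Matrix.of fun i j =>
    if (i : ℕ) < n then
      (if (i : ℕ) ≤ (j : ℕ) ∧ (j : ℕ) ≤ (i : ℕ) + m then f.coeff (m + i - j) else 0)
    else
      (if (i : ℕ) - n ≤ (j : ℕ) ∧ (j : ℕ) ≤ ((i : ℕ) - n) + n then
        g.coeff (n + ((i : ℕ) - n) - j) else 0)

/-- The resultant of `f` and `g` (of degrees `m` and `n`), the determinant of
their Sylvester matrix. -/
def resultant {R : Type*} [CommRing R] (m n : ℕ) (f g : Polynomial R) : R :=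
  (sylvester m n f g).det

/-- Let `R` be a DVR with uniformizer `π` and let
`f = X^(2n+1) + a_{2n} X^(2n) + ⋯ + a₁ X + a₀` be monic of odd degree `2n+1`
with `π ∣ a₁` and `π² ∣ a₀`.  Then `π²` divides `Res(f, f')`. -/
def sylvec {R : Type*} [CommRing R] (m n : ℕ) (u v : Polynomial R) : Fin (m + n) → R :=
  fun i => if (i : ℕ) < n then u.coeff (n - 1 - (i : ℕ)) else v.coeff (m - 1 - ((i : ℕ) - n))

lemma coeff_mul_of_bound {R : Type*} [CommRing R] {u : Polynomial R} {n : ℕ}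
    (hu : ∀ s, n ≤ s → u.coeff s = 0) (f : Polynomial R) (d : ℕ) :
    (u * f).coeff d
      = ∑ s ∈ Finset.range n, u.coeff s * (if s ≤ d then f.coeff (d - s) else 0) := by
  rw [Polynomial.coeff_mul, Finset.Nat.sum_antidiagonal_eq_sum_range_succ_mk]
  have h1 : ∑ s ∈ Finset.range (d+1), u.coeff s * f.coeff (d - s)
      = ∑ s ∈ Finset.range (d+1), u.coeff s * (if s ≤ d then f.coeff (d - s) else 0) := by
    refine Finset.sum_congr rfl fun s hs => ?_
    rw [if_pos (by simpa [Nat.lt_succ_iff] using hs)]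
  rw [h1]
  have h2 : ∑ s ∈ Finset.range (d+1), u.coeff s * (if s ≤ d then f.coeff (d - s) else 0)
      = ∑ s ∈ Finset.range (n + (d+1)), u.coeff s * (if s ≤ d then f.coeff (d - s) else 0) := by
    refine Finset.sum_subset (Finset.range_subset_range.2 (by omega)) fun s _ hs => ?_
    rw [if_neg (by simp only [Finset.mem_range] at hs; omega), mul_zero]
  have h3 : ∑ s ∈ Finset.range n, u.coeff s * (if s ≤ d then f.coeff (d - s) else 0)
      = ∑ s ∈ Finset.range (n + (d+1)), u.coeff s * (if s ≤ d then f.coeff (d - s) else 0) := by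
    refine Finset.sum_subset (Finset.range_subset_range.2 (by omega)) fun s _ hs => ?_
    rw [hu s (by simp only [Finset.mem_range] at hs; omega), zero_mul]
  rw [h2, ← h3]

lemma vecMul_sylvester {R : Type*} [CommRing R] (m n : ℕ) (f g u v : Polynomial R)
    (hf : f.natDegree ≤ m) (hg : g.natDegree ≤ n)
    (hu : ∀ s, n ≤ s → u.coeff s = 0) (hv : ∀ t, m ≤ t → v.coeff t = 0)
    (j : Fin (m + n)) :
    (Matrix.vecMul (sylvec m n u v) (sylvester m n f g)) j
      = (u * f + v * g).coeff (m + n - 1 - (j : ℕ)) := by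
  have hj : (j : ℕ) < m + n := j.isLt
  set d := m + n - 1 - (j : ℕ) with hd
  rw [Polynomial.coeff_add, coeff_mul_of_bound hu f d, coeff_mul_of_bound hv g d]
  have : Matrix.vecMul (sylvec m n u v) (sylvester m n f g) j
      = ∑ i ∈ Finset.range (m + n),
          (if i < n then u.coeff (n - 1 - i) else v.coeff (m - 1 - (i - n))) *
          (if i < n then
            (if i ≤ (j : ℕ) ∧ (j : ℕ) ≤ i + m then f.coeff (m + i - j) else 0)
          else
            (if i - n ≤ (j : ℕ) ∧ (j : ℕ) ≤ (i - n) + n then g.coeff (n + (i - n) - j) else 0)) := by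
    rw [Matrix.vecMul, dotProduct]
    rw [← Fin.sum_univ_eq_sum_range (fun i =>
      (if i < n then u.coeff (n - 1 - i) else v.coeff (m - 1 - (i - n))) *
      (if i < n then
        (if i ≤ (j : ℕ) ∧ (j : ℕ) ≤ i + m then f.coeff (m + i - j) else 0)
      else
        (if i - n ≤ (j : ℕ) ∧ (j : ℕ) ≤ (i - n) + n then g.coeff (n + (i - n) - j) else 0)))
        (m + n)]
    rfl
  have hr : Finset.range (m + n) = Finset.range (n + m) := by rw [Nat.add_comm]
  rw [this, hr, Finset.sum_range_add]
  congr 1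
  · -- f part
    rw [← Finset.sum_range_reflect]
    refine Finset.sum_congr rfl fun i hi => ?_
    simp only [Finset.mem_range] at hi
    have h1 : n - 1 - i < n := by omega
    rw [if_pos h1, if_pos h1]
    have h2 : n - 1 - (n - 1 - i) = i := by omega
    rw [h2]
    by_cases hc : n - 1 - i ≤ (j : ℕ) ∧ (j : ℕ) ≤ (n - 1 - i) + m
    · rw [if_pos hc, if_pos (by omega),
        show m + (n - 1 - i) - (j : ℕ) = d - i by omega]
    · rw [if_neg hc]
      by_cases hc2 : i ≤ d
      · rw [if_pos hc2]
        have : f.natDegree < d - i := by omega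
        rw [Polynomial.coeff_eq_zero_of_natDegree_lt this]
      · rw [if_neg hc2]
  · -- g part
    rw [← Finset.sum_range_reflect]
    refine Finset.sum_congr rfl fun k hk => ?_
    simp only [Finset.mem_range] at hk
    have h1 : ¬ (n + (m - 1 - k) < n) := by omega
    rw [if_neg h1, if_neg h1]
    have h2 : n + (m - 1 - k) - n = m - 1 - k := by omega
    rw [h2]
    have h3 : m - 1 - (m - 1 - k) = k := by omega
    rw [h3]
    by_cases hc : m - 1 - k ≤ (j : ℕ) ∧ (j : ℕ) ≤ (m - 1 - k) + n
    · rw [if_pos hc, if_pos (by omega),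
        show n + (m - 1 - k) - (j : ℕ) = d - k by omega]
    · rw [if_neg hc]
      by_cases hc2 : k ≤ d
      · rw [if_pos hc2]
        have : g.natDegree < d - k := by omega
        rw [Polynomial.coeff_eq_zero_of_natDegree_lt this]
      · rw [if_neg hc2]

lemma sylvester_map {R S : Type*} [CommRing R] [CommRing S] (φ : R →+* S) (m n : ℕ)
    (f g : Polynomial R) :
    (sylvester m n f g).map φ = sylvester m n (f.map φ) (g.map φ) := by
  ext i j
  simp only [_root_.sylvester, Matrix.map_apply, Matrix.of_apply, apply_ite φ, map_zero,
    Polynomial.coeff_map]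

private theorem dvr_sq_dvd_resultant' (R : Type*) [CommRing R] [IsDomain R]
    [IsDiscreteValuationRing R] (π : R) (hπ : Irreducible π)
    (n : ℕ) (hn : 1 ≤ n) (f : Polynomial R) (hmonic : f.Monic)
    (hdeg : f.natDegree = 2 * n + 1)
    (h1 : π ∣ f.coeff 1) (h0 : π ^ 2 ∣ f.coeff 0) :
    π ^ 2 ∣ (sylvester (2 * n + 1) (2 * n) f (Polynomial.derivative f)).det := by
  classical
  set S := sylvester (2 * n + 1) (2 * n) f (Polynomial.derivative f) with hSdef
  have hπ1 : π ∣ f.coeff 0 := dvd_trans (dvd_pow_self π two_ne_zero) h0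
  let jl : Fin (2 * n + 1 + 2 * n) := ⟨4 * n, by omega⟩
  let r1 : Fin (2 * n + 1 + 2 * n) := ⟨2 * n - 1, by omega⟩
  have hjl : (jl : ℕ) = 4 * n := rfl
  have hr1 : (r1 : ℕ) = 2 * n - 1 := rfl
  let c1 : Fin (2 * n + 1 + 2 * n) → R := Pi.single r1 (1 : R)
  let c2 : Fin (2 * n + 1 + 2 * n) → R := Pi.single jl (1 : R)
  -- the last column of S
  have hcol : (fun i => S i jl)
      = f.coeff 0 • c1 + (Polynomial.derivative f).coeff 0 • c2 := by
    funext i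
    have hi := i.isLt
    simp only [hSdef, _root_.sylvester, Matrix.of_apply, Pi.add_apply, Pi.smul_apply,
      Pi.single_apply, smul_eq_mul, hjl, c1, c2]
    by_cases e1 : i = r1
    · have hiv : (i : ℕ) = 2 * n - 1 := by rw [e1, hr1]
      have e2 : ¬ (i = jl) := by
        intro h; rw [h, hjl] at hiv; omega
      rw [if_pos (by omega), if_pos (by constructor <;> omega), if_pos e1, if_neg e2]
      rw [show 2 * n + 1 + (i : ℕ) - 4 * n = 0 by omega]
      ring
    · by_cases e2 : i = jl
      · have hiv : (i : ℕ) = 4 * n := by rw [e2, hjl]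
        rw [if_neg (by omega), if_pos (by constructor <;> omega), if_neg e1, if_pos e2]
        rw [show 2 * n + ((i : ℕ) - 2 * n) - 4 * n = 0 by omega]
        ring
      · have hiv1 : ¬ ((i : ℕ) = 2 * n - 1) := fun h => e1 (Fin.ext (by rw [h, hr1]))
        have hiv2 : ¬ ((i : ℕ) = 4 * n) := fun h => e2 (Fin.ext (by rw [h, hjl]))
        rw [if_neg e1, if_neg e2, mul_zero, mul_zero, add_zero]
        by_cases h3 : (i : ℕ) < 2 * n
        · rw [if_pos h3, if_neg (by omega)]
        · rw [if_neg h3, if_neg (by omega)]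
  have hdet : S.det = f.coeff 0 * (S.updateCol jl c1).det
      + (Polynomial.derivative f).coeff 0 * (S.updateCol jl c2).det := by
    conv_lhs => rw [← Matrix.updateCol_eq_self S jl, hcol]
    rw [Matrix.det_updateCol_add, Matrix.det_updateCol_smul,
      Matrix.det_updateCol_smul]
  rw [hdet]
  have hd0 : (Polynomial.derivative f).coeff 0 = f.coeff 1 := by
    simp [Polynomial.coeff_derivative]
  -- it remains to see that π divides the second minor
  have hminor : π ∣ (S.updateCol jl c2).det := by
    set I : Ideal R := Ideal.span {π} with hI
    haveI : I.IsMaximal := PrincipalIdealRing.isMaximal_of_irreducible hπ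
    letI : Field (R ⧸ I) := Ideal.Quotient.field I
    set φ : R →+* R ⧸ I := Ideal.Quotient.mk I with hφ
    rw [← Ideal.mem_span_singleton, ← hI, ← Ideal.Quotient.eq_zero_iff_mem, ← hφ,
      RingHom.map_det, RingHom.mapMatrix_apply]
    -- push the map inside
    have hmap : ((S.updateCol jl c2).map φ)
        = (sylvester (2 * n + 1) (2 * n) (f.map φ) ((Polynomial.derivative f).map φ)
            ).updateCol jl (Pi.single jl (1 : R ⧸ I)) := by
      ext i j
      rw [Matrix.map_apply, Matrix.updateCol_apply, Matrix.updateCol_apply,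
        ← sylvester_map, hSdef]
      by_cases hj : j = jl
      · rw [if_pos hj, if_pos hj]
        simp only [c2, Pi.single_apply, apply_ite φ, map_one, map_zero]
      · rw [if_neg hj, if_neg hj, Matrix.map_apply]
    rw [hmap]
    set F : Polynomial (R ⧸ I) := f.map φ with hFdef
    have hder : (Polynomial.derivative f).map φ = Polynomial.derivative F :=
      (Polynomial.derivative_map f φ).symm
    rw [hder]
    have hF0 : F.coeff 0 = 0 := by
      rw [hFdef, Polynomial.coeff_map, hφ, Ideal.Quotient.eq_zero_iff_mem, hI,
        Ideal.mem_span_singleton]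
      exact hπ1
    have hF1 : F.coeff 1 = 0 := by
      rw [hFdef, Polynomial.coeff_map, hφ, Ideal.Quotient.eq_zero_iff_mem, hI,
        Ideal.mem_span_singleton]
      exact h1
    have hX2 : (Polynomial.X : Polynomial (R ⧸ I)) ^ 2 ∣ F := by
      rw [Polynomial.X_pow_dvd_iff]
      intro d hd
      interval_cases d
      · exact hF0
      · exact hF1
    obtain ⟨h, hh⟩ := hX2
    have hFmonic : F.Monic := hmonic.map φ
    have hFdeg : F.natDegree = 2 * n + 1 := by
      rw [hFdef, hmonic.natDegree_map, hdeg]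
    have hhmonic : h.Monic := by
      have := hFmonic
      rw [hh] at this
      exact (Polynomial.monic_X_pow 2).of_mul_monic_left this
    have hhdeg : h.natDegree = 2 * n - 1 := by
      have h2 := hFdeg
      rw [hh, Polynomial.natDegree_mul (pow_ne_zero 2 Polynomial.X_ne_zero) hhmonic.ne_zero,
        Polynomial.natDegree_X_pow] at h2
      omega
    -- the dependence vector
    set U : Polynomial (R ⧸ I) := Polynomial.C 2 * h + Polynomial.X * Polynomial.derivative h
      with hUdef
    set V : Polynomial (R ⧸ I) := -(Polynomial.X * h) with hVdef
    have hFd : Polynomial.derivative F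
        = Polynomial.C 2 * Polynomial.X * h + Polynomial.X ^ 2 * Polynomial.derivative h := by
      rw [hh, Polynomial.derivative_mul, Polynomial.derivative_X_pow]
      push_cast
      ring
    have key : U * F + V * Polynomial.derivative F = 0 := by
      rw [hUdef, hVdef, hFd, hh]
      ring
    have hU : ∀ s, 2 * n ≤ s → U.coeff s = 0 := by
      intro s hs
      refine Polynomial.coeff_eq_zero_of_natDegree_lt (lt_of_le_of_lt ?_ (by omega : 2*n-1 < s))
      refine le_trans (Polynomial.natDegree_add_le _ _) (max_le ?_ ?_)
      · exact le_trans (Polynomial.natDegree_C_mul_le _ _) (by omega)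
      · refine le_trans (Polynomial.natDegree_mul_le) ?_
        have := Polynomial.natDegree_derivative_le h
        simp only [Polynomial.natDegree_X]
        omega
    have hV : ∀ t, 2 * n + 1 ≤ t → V.coeff t = 0 := by
      intro t ht
      refine Polynomial.coeff_eq_zero_of_natDegree_lt (lt_of_le_of_lt ?_ (by omega : 2*n < t))
      rw [hVdef, Polynomial.natDegree_neg]
      refine le_trans (Polynomial.natDegree_mul_le) ?_
      simp only [Polynomial.natDegree_X]
      omega
    refine Matrix.exists_vecMul_eq_zero_iff.mp ⟨sylvec (2 * n + 1) (2 * n) U V, ?_, ?_⟩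
    · -- the vector is nonzero
      intro hx
      have := congrFun hx ⟨2 * n, by omega⟩
      rw [sylvec] at this
      simp only [Pi.zero_apply] at this
      rw [if_neg (by simp), show (2*n+1) - 1 - ((2*n) - 2*n) = (2*n-1) + 1 by omega] at this
      rw [hVdef, Polynomial.coeff_neg, Polynomial.coeff_X_mul, ← hhdeg,
        hhmonic.coeff_natDegree] at this
      exact one_ne_zero (neg_eq_zero.mp this).symm.symm
    · -- it is in the kernel
      funext j
      by_cases hj : j = jl
      · subst hj
        rw [Matrix.vecMul, dotProduct, Pi.zero_apply]
        have hsum : ∀ i, sylvec (2 * n + 1) (2 * n) U V i *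
            ((sylvester (2 * n + 1) (2 * n) F (Polynomial.derivative F)).updateCol jl
              (Pi.single jl (1 : R ⧸ I))) i jl
            = if i = jl then sylvec (2 * n + 1) (2 * n) U V i else 0 := by
          intro i
          rw [Matrix.updateCol_apply, if_pos rfl, Pi.single_apply]
          split_ifs <;> simp
        simp only [hsum]
        rw [Finset.sum_ite_eq' Finset.univ jl, if_pos (Finset.mem_univ _)]
        have hjval : sylvec (2 * n + 1) (2 * n) U V jl = V.coeff 0 := by
          simp only [sylvec, hjl]
          rw [if_neg (by omega), show 2 * n + 1 - 1 - (4 * n - 2 * n) = 0 by omega]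
        rw [hjval, hVdef, Polynomial.coeff_neg, Polynomial.mul_coeff_zero,
          Polynomial.coeff_X_zero, zero_mul, neg_zero]
      · have : (Matrix.vecMul (sylvec (2 * n + 1) (2 * n) U V)
            ((sylvester (2 * n + 1) (2 * n) F (Polynomial.derivative F)).updateCol jl
              (Pi.single jl (1 : R ⧸ I)))) j
            = (Matrix.vecMul (sylvec (2 * n + 1) (2 * n) U V)
              (sylvester (2 * n + 1) (2 * n) F (Polynomial.derivative F))) j := by
          rw [Matrix.vecMul, Matrix.vecMul, dotProduct, dotProduct]
          refine Finset.sum_congr rfl fun i _ => ?_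
          rw [Matrix.updateCol_apply, if_neg hj]
        rw [this, vecMul_sylvester _ _ _ _ _ _ (by omega) ?_ hU hV, key]
        · simp
        · exact le_trans (Polynomial.natDegree_derivative_le F) (by omega)
  obtain ⟨c, hc⟩ := hminor
  obtain ⟨b, hb⟩ := h1
  refine dvd_add (dvd_mul_of_dvd_left h0 _) ?_
  rw [hd0, hb, hc, sq]
  exact ⟨b * c, by ring⟩


theorem dvr_sq_dvd_resultant (R : Type*) [CommRing R] [IsDomain R]
    [IsDiscreteValuationRing R] (π : R) (hπ : Irreducible π)
    (n : ℕ) (hn : 1 ≤ n) (f : Polynomial R) (hmonic : f.Monic)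
    (hdeg : f.natDegree = 2 * n + 1)
    (h1 : π ∣ f.coeff 1) (h0 : π ^ 2 ∣ f.coeff 0) :
    π ^ 2 ∣ resultant (2 * n + 1) (2 * n) f (Polynomial.derivative f) := by
  rw [_root_.resultant]
  exact dvr_sq_dvd_resultant' R π hπ n hn f hmonic hdeg h1 h0
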